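/- Let Γ be a coordination population network game with star structure with root set R, and let β > 0. Define L(μ) = Σ_{j∈R} [Σ_{i : E j i} μ_jᵀ A_{ji} μ_i + v_β(μ_j) + Σ_{i : E j i} v_β(μ_i)] for μ ∈ Δ. Then along any solution μ : [0,∞) → Δ of the homogeneous belief dynamics μ'(τ) = BR(μ(τ)) − μ(τ) that remains in the interior of Δ, the function τ ↦ L(μ(τ)) is nondecreasing, and its derivative at τ is zero if and only if BR_i(μ(τ)) = μ_i(τ) for all i ∈ V, i.e. if and only if μ(τ) is a quantal response equilibrium. -/

import Mathlib

open Real Filter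

/-- Membership in the standard probability simplex on a finite set `S`. -/
def inSimplex {S : Type*} [Fintype S] (x : S → ℝ) : Prop :=
  (∀ s, 0 ≤ x s) ∧ ∑ s, x s = 1

/-- Membership in the product of simplices `Δ = ∏ i, Δ_i`. -/
def inProd {V : Type*} [Fintype V] {S : V → Type*} [∀ i, Fintype (S i)]
    (μ : ∀ i, S i → ℝ) : Prop :=
  ∀ i, inSimplex (μ i)

/-- Payoff to population `i` of pure strategy `s` given beliefs `μ`. -/
def payoffTo {V : Type*} [Fintype V] {S : V → Type*} [∀ i, Fintype (S i)]
    (E : V → V → Prop) [DecidableRel E] (A : ∀ i j, S i → S j → ℝ)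
    (μ : ∀ i, S i → ℝ) (i : V) (s : S i) : ℝ :=
  ∑ j, if E i j then ∑ s' : S j, A i j s s' * μ j s' else 0

/-- Logit best response of population `i` to beliefs `μ`, rationality `β`. -/
noncomputable def BR {V : Type*} [Fintype V] {S : V → Type*} [∀ i, Fintype (S i)]
    (E : V → V → Prop) [DecidableRel E] (A : ∀ i j, S i → S j → ℝ) (β : ℝ)
    (μ : ∀ i, S i → ℝ) (i : V) (s : S i) : ℝ :=
  Real.exp (β * payoffTo E A μ i s) / ∑ s' : S i, Real.exp (β * payoffTo E A μ i s')

/-- Quantal response equilibrium. -/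
def isQRE {V : Type*} [Fintype V] {S : V → Type*} [∀ i, Fintype (S i)]
    (E : V → V → Prop) [DecidableRel E] (A : ∀ i j, S i → S j → ℝ) (β : ℝ)
    (x : ∀ i, S i → ℝ) : Prop :=
  inProd x ∧ ∀ i, x i = BR E A β x i

/-- The bilinear form `x_iᵀ A_{ij} y_j`. -/
def bilin {V : Type*} {S : V → Type*} [∀ i, Fintype (S i)]
    (A : ∀ i j, S i → S j → ℝ) (x y : ∀ i, S i → ℝ) (i j : V) : ℝ :=
  ∑ s : S i, ∑ s' : S j, x i s * A i j s s' * y j s'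

/-- The game is weighted zero-sum with weights `ω`. -/
def weightedZeroSum {V : Type*} [Fintype V] {S : V → Type*} [∀ i, Fintype (S i)]
    (E : V → V → Prop) [DecidableRel E] (A : ∀ i j, S i → S j → ℝ)
    (ω : V → ℝ) : Prop :=
  ∀ x, inProd x → ∑ i, ω i * ∑ j, (if E i j then bilin A x x i j else 0) = 0

/-- Entropy perturbation `v_β(x) = -(1/β) Σ_s x s · ln (x s)` (`Real.log 0 = 0`). -/
noncomputable def vEnt {S : Type*} [Fintype S] (β : ℝ) (x : S → ℝ) : ℝ :=
  -(1 / β) * ∑ s, x s * Real.log (x s)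

/-- Perturbed payoff `π_i(x_i, μ)`. -/
noncomputable def pPay {V : Type*} [Fintype V] {S : V → Type*} [∀ i, Fintype (S i)]
    (E : V → V → Prop) [DecidableRel E] (A : ∀ i j, S i → S j → ℝ) (β : ℝ)
    (μ : ∀ i, S i → ℝ) (i : V) (xi : S i → ℝ) : ℝ :=
  (∑ j, if E i j then ∑ s : S i, ∑ s' : S j, xi s * A i j s s' * μ j s' else 0)
    + vEnt β xi

/-- Second partial derivative of `μ ↦ BR_i(μ)(s)` (on the ambient space) in the
coordinate `(j, s')`, evaluated at `μ`. -/
noncomputable def secondPartialBR {V : Type*} [Fintype V] [DecidableEq V]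
    {S : V → Type*} [∀ i, Fintype (S i)] [∀ i, DecidableEq (S i)]
    (E : V → V → Prop) [DecidableRel E] (A : ∀ i j, S i → S j → ℝ) (β : ℝ)
    (μ : ∀ i, S i → ℝ) (i : V) (s : S i) (j : V) (s' : S j) : ℝ :=
  iteratedDeriv 2 (fun r : ℝ =>
    BR E A β (fun k => μ k + r • Pi.single (M := fun k => S k → ℝ) j (Pi.single s' (1 : ℝ)) k) i s) 0

/-- The `(i,s)`-component of the time-reparameterized mean-belief vector field of an
initially heterogeneous system with initial belief variances `σ2`. -/
noncomputable def heteroField {V : Type*} [Fintype V] [DecidableEq V]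
    {S : V → Type*} [∀ i, Fintype (S i)] [∀ i, DecidableEq (S i)]
    (E : V → V → Prop) [DecidableRel E] (A : ∀ i j, S i → S j → ℝ) (β : ℝ)
    (σ2 : ∀ j, S j → ℝ) (τ : ℝ) (μ : ∀ i, S i → ℝ) (i : V) (s : S i) : ℝ :=
  BR E A β μ i s - μ i s + (1 / 2) * Real.exp (-2 * τ) *
    ∑ j, if E i j then
      ∑ s' : S j, σ2 j s' * secondPartialBR E A β μ i s j s' else 0

section Aux
variable {V : Type*} [Fintype V] {S : V → Type*} [∀ i, Fintype (S i)]
variable (E : V → V → Prop) [DecidableRel E] (A : ∀ i j, S i → S j → ℝ) (β : ℝ)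

lemma sum_exp_pos [∀ i, Nonempty (S i)] (μ : ∀ i, S i → ℝ) (i : V) :
    0 < ∑ s' : S i, Real.exp (β * payoffTo E A μ i s') :=
  Finset.sum_pos (fun s _ => Real.exp_pos _) Finset.univ_nonempty

lemma BR_pos [∀ i, Nonempty (S i)] (μ : ∀ i, S i → ℝ) (i : V) (s : S i) :
    0 < BR E A β μ i s :=
  div_pos (Real.exp_pos _) (sum_exp_pos E A β μ i)

lemma sum_BR [∀ i, Nonempty (S i)] (μ : ∀ i, S i → ℝ) (i : V) :
    ∑ s : S i, BR E A β μ i s = 1 := by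
  unfold BR
  rw [← Finset.sum_div, div_self (sum_exp_pos E A β μ i).ne']

lemma log_BR [∀ i, Nonempty (S i)] (μ : ∀ i, S i → ℝ) (i : V) (s : S i) :
    Real.log (BR E A β μ i s)
      = β * payoffTo E A μ i s
        - Real.log (∑ s' : S i, Real.exp (β * payoffTo E A μ i s')) := by
  unfold BR
  rw [Real.log_div (Real.exp_ne_zero _) (sum_exp_pos E A β μ i).ne', Real.log_exp]

lemma prod_log_nonneg {a b : ℝ} (ha : 0 < a) (hb : 0 < b) :
    0 ≤ (a - b) * (Real.log a - Real.log b) := by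
  rcases le_total b a with h | h
  · exact mul_nonneg (by linarith) (by
      have := Real.log_le_log hb h; linarith)
  · have h1 : a - b ≤ 0 := by linarith
    have h2 : Real.log a - Real.log b ≤ 0 := by
      have := Real.log_le_log ha h; linarith
    nlinarith

lemma prod_log_eq_zero_iff {a b : ℝ} (ha : 0 < a) (hb : 0 < b) :
    (a - b) * (Real.log a - Real.log b) = 0 ↔ a = b := by
  constructor
  · intro h
    by_contra hne
    rcases lt_or_gt_of_ne hne with hlt | hlt
    · have h1 : a - b < 0 := by linarith
      have h2 : Real.log a - Real.log b < 0 := by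
        have := Real.log_lt_log ha hlt; linarith
      nlinarith
    · have h1 : 0 < a - b := by linarith
      have h2 : 0 < Real.log a - Real.log b := by
        have := Real.log_lt_log hb hlt; linarith
      nlinarith
  · rintro rfl; ring

lemma node_identity [∀ i, Nonempty (S i)] (hβ : 0 < β) (m : ∀ i, S i → ℝ) (i : V)
    (hm_sum : ∑ s, m i s = 1) :
    (∑ s, (BR E A β m i s - m i s) * payoffTo E A m i s)
      + (-(1/β) * ∑ s, ((BR E A β m i s - m i s) * Real.log (m i s)
          + (BR E A β m i s - m i s)))
    = (1/β) * ∑ s, (BR E A β m i s - m i s)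
        * (Real.log (BR E A β m i s) - Real.log (m i s)) := by
  set b : S i → ℝ := fun s => BR E A β m i s with hb
  set Z : ℝ := ∑ s' : S i, Real.exp (β * payoffTo E A m i s') with hZ
  have hd0 : ∑ s, (b s - m i s) = 0 := by
    rw [Finset.sum_sub_distrib, hm_sum, hb]
    simp [sum_BR E A β m i]
  have hu : ∀ s, payoffTo E A m i s = (1/β) * (Real.log (b s) + Real.log Z) := by
    intro s
    have := log_BR E A β m i s
    rw [← hZ] at this
    field_simp
    linarith
  calc (∑ s, (b s - m i s) * payoffTo E A m i s)
      + (-(1/β) * ∑ s, ((b s - m i s) * Real.log (m i s) + (b s - m i s)))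
      = (∑ s, ((1/β) * ((b s - m i s) * (Real.log (b s) - Real.log (m i s)))
          + (1/β) * ((b s - m i s) * Real.log (m i s)) + (1/β) * Real.log Z * (b s - m i s)))
        + (-(1/β) * ((∑ s, (b s - m i s) * Real.log (m i s)) + ∑ s, (b s - m i s))) := by
        rw [Finset.sum_add_distrib]
        congr 1
        refine Finset.sum_congr rfl fun s _ => ?_
        rw [hu s]; ring
    _ = (1/β) * ∑ s, (b s - m i s) * (Real.log (b s) - Real.log (m i s)) := by
        simp only [Finset.sum_add_distrib, ← Finset.mul_sum, hd0]
        ring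

lemma deriv_raw [DecidableEq V] (R : Finset V)
    (μ : ℝ → ∀ i, S i → ℝ) (τ : ℝ) (D : ∀ i, S i → ℝ)
    (hpos : ∀ i s, μ τ i s ≠ 0) (hc : HasDerivAt μ D τ) :
    HasDerivAt (fun t => ∑ j, if j ∈ R then
        ((∑ i, if E j i then bilin A (μ t) (μ t) j i else 0)
          + vEnt β (μ t j) + ∑ i, if E j i then vEnt β (μ t i) else 0)
      else 0)
      (∑ j, if j ∈ R then
        ((∑ i, if E j i then ∑ s : S j, ∑ s' : S i,
            (D j s * A j i s s' * μ τ i s' + μ τ j s * A j i s s' * D i s') else 0)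
          + (-(1/β) * ∑ s, (D j s * Real.log (μ τ j s) + μ τ j s * (D j s / μ τ j s)))
          + ∑ i, if E j i then
              (-(1/β) * ∑ s, (D i s * Real.log (μ τ i s) + μ τ i s * (D i s / μ τ i s)))
            else 0)
      else 0) τ := by
  have hcs : ∀ i s, HasDerivAt (fun t => μ t i s) (D i s) τ :=
    fun i s => hasDerivAt_pi.mp (hasDerivAt_pi.mp hc i) s
  have hv : ∀ k, HasDerivAt (fun t => vEnt β (μ t k))
      (-(1/β) * ∑ s, (D k s * Real.log (μ τ k s) + μ τ k s * (D k s / μ τ k s))) τ := by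
    intro k
    have h1 : HasDerivAt (fun t => ∑ s, μ t k s * Real.log (μ t k s))
        (∑ s, (D k s * Real.log (μ τ k s) + μ τ k s * (D k s / μ τ k s))) τ :=
      HasDerivAt.fun_sum fun s _ => (hcs k s).mul ((hcs k s).log (hpos k s))
    simpa [vEnt] using h1.const_mul (-(1/β))
  apply HasDerivAt.fun_sum
  intro j _
  by_cases hj : j ∈ R
  · simp only [if_pos hj]
    refine HasDerivAt.add (HasDerivAt.add ?_ (hv j)) (HasDerivAt.fun_sum fun i _ => ?_)
    · refine HasDerivAt.fun_sum fun i _ => ?_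
      by_cases hij : E j i
      · simp only [if_pos hij, bilin]
        exact HasDerivAt.fun_sum fun s _ => HasDerivAt.fun_sum fun s' _ =>
          ((hcs j s).mul_const (A j i s s')).mul (hcs i s')
      · simp only [if_neg hij]; exact hasDerivAt_const τ 0
    · by_cases hij : E j i
      · simp only [if_pos hij]; exact hv i
      · simp only [if_neg hij]; exact hasDerivAt_const τ 0
  · simp only [if_neg hj]; exact hasDerivAt_const τ 0

lemma star_pair_sum [DecidableEq V] (hE_symm : ∀ i j, E i j → E j i) (R : Finset V)
    (hleafR : ∀ i, i ∉ R → ∀ j, E i j → j ∈ R)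
    (hroot : ∀ j ∈ R, ∀ i, E j i → i ∉ R) (F : V → V → ℝ) :
    (∑ j, if j ∈ R then ∑ i, (if E j i then F j i + F i j else 0) else 0)
      = ∑ k, ∑ l, if E k l then F k l else 0 := by
  have key : ∀ k l, (if E k l then F k l else 0)
      = (if k ∈ R then if E k l then F k l else 0 else 0)
        + (if l ∈ R then if E l k then F k l else 0 else 0) := by
    intro k l
    by_cases hkl : E k l
    · by_cases hk : k ∈ R
      · have hl : l ∉ R := hroot k hk l hkl
        simp [hkl, hk, hl]
      · have hl : l ∈ R := hleafR k hk l hkl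
        simp [hkl, hk, hl, hE_symm k l hkl]
    · have hlk : ¬ E l k := fun h => hkl (hE_symm l k h)
      simp [hkl, hlk]
  calc (∑ j, if j ∈ R then ∑ i, (if E j i then F j i + F i j else 0) else 0)
      = ∑ j, ∑ i, ((if j ∈ R then if E j i then F j i else 0 else 0)
          + (if j ∈ R then if E j i then F i j else 0 else 0)) := by
        refine Finset.sum_congr rfl fun j _ => ?_
        by_cases hj : j ∈ R
        · simp only [if_pos hj]
          refine Finset.sum_congr rfl fun i _ => ?_
          by_cases hij : E j i <;> simp [hij]
        · simp [hj]
    _ = ∑ k, ∑ l, if E k l then F k l else 0 := by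
        rw [Finset.sum_congr rfl fun k (_ : k ∈ Finset.univ) =>
          (Finset.sum_congr rfl fun l (_ : l ∈ Finset.univ) => key k l)]
        simp only [Finset.sum_add_distrib]
        congr 1
        rw [Finset.sum_comm]

lemma star_node_sum [DecidableEq V] (hE_symm : ∀ i j, E i j → E j i) (R : Finset V)
    (hleaf : ∀ i, i ∉ R → (∃! j, E i j) ∧ ∀ j, E i j → j ∈ R)
    (hroot : ∀ j ∈ R, ∀ i, E j i → i ∉ R) (e : V → ℝ) :
    (∑ j, if j ∈ R then (e j + ∑ i, if E j i then e i else 0) else 0) = ∑ k, e k := by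
  have step1 : (∑ j, if j ∈ R then (e j + ∑ i, if E j i then e i else 0) else 0)
      = (∑ j, if j ∈ R then e j else 0)
        + ∑ i, ∑ j, (if j ∈ R ∧ E j i then e i else 0) := by
    rw [Finset.sum_comm (s := Finset.univ) (t := Finset.univ)
      (f := fun i j => if j ∈ R ∧ E j i then e i else 0)]
    rw [← Finset.sum_add_distrib]
    refine Finset.sum_congr rfl fun j _ => ?_
    by_cases hj : j ∈ R
    · simp only [if_pos hj]
      congr 1
      refine Finset.sum_congr rfl fun i _ => ?_
      by_cases hij : E j i <;> simp [hij, hj]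
    · simp [hj]
  rw [step1]
  have step2 : ∀ i, (∑ j, if j ∈ R ∧ E j i then e i else 0) = if i ∈ R then 0 else e i := by
    intro i
    by_cases hi : i ∈ R
    · rw [if_pos hi]
      refine Finset.sum_eq_zero fun j _ => ?_
      by_cases h : j ∈ R ∧ E j i
      · exact absurd hi (hroot j h.1 i h.2)
      · simp [h]
    · rw [if_neg hi]
      obtain ⟨⟨j₀, hj₀, huniq⟩, hall⟩ := hleaf i hi
      have hcond : ∀ j, (j ∈ R ∧ E j i) ↔ j = j₀ := by
        intro j
        constructor
        · rintro ⟨_, hji⟩; exact huniq j (hE_symm j i hji)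
        · rintro rfl; exact ⟨hall _ hj₀, hE_symm i _ hj₀⟩
      trans (∑ j, if j = j₀ then e i else 0)
      · exact Finset.sum_congr rfl fun j _ => by simp only [hcond j]
      · simp
  rw [Finset.sum_congr rfl fun i (_ : i ∈ Finset.univ) => step2 i]
  rw [← Finset.sum_add_distrib]
  refine Finset.sum_congr rfl fun k _ => ?_
  by_cases hk : k ∈ R <;> simp [hk]

lemma raw_eq [DecidableEq V]
    (hE_symm : ∀ i j, E i j → E j i)
    (hcoord : ∀ i j, E i j → ∀ (s : S i) (s' : S j), A i j s s' = A j i s' s)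
    (R : Finset V)
    (hleaf : ∀ i, i ∉ R → (∃! j, E i j) ∧ ∀ j, E i j → j ∈ R)
    (hroot : ∀ j ∈ R, ∀ i, E j i → i ∉ R)
    (m : ∀ i, S i → ℝ) (D : ∀ i, S i → ℝ) (hpos : ∀ i s, m i s ≠ 0) :
    (∑ j, if j ∈ R then
        ((∑ i, if E j i then ∑ s : S j, ∑ s' : S i,
            (D j s * A j i s s' * m i s' + m j s * A j i s s' * D i s') else 0)
          + (-(1/β) * ∑ s, (D j s * Real.log (m j s) + m j s * (D j s / m j s)))
          + ∑ i, if E j i then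
              (-(1/β) * ∑ s, (D i s * Real.log (m i s) + m i s * (D i s / m i s)))
            else 0)
      else 0)
    = ∑ k, ((∑ s, D k s * payoffTo E A m k s)
        + (-(1/β) * ∑ s, (D k s * Real.log (m k s) + D k s))) := by
  set F : V → V → ℝ := fun k l => ∑ s : S k, ∑ s' : S l, D k s * A k l s s' * m l s' with hF
  set e : V → ℝ := fun k => -(1/β) * ∑ s, (D k s * Real.log (m k s) + D k s) with he
  have hcancel : ∀ (k : V) (s : S k), m k s * (D k s / m k s) = D k s := by
    intro k s; rw [mul_comm, div_mul_cancel₀ _ (hpos k s)]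
  have hX : ∀ j i, E j i → (∑ s : S j, ∑ s' : S i,
      (D j s * A j i s s' * m i s' + m j s * A j i s s' * D i s')) = F j i + F i j := by
    intro j i hij
    rw [show (∑ s : S j, ∑ s' : S i,
        (D j s * A j i s s' * m i s' + m j s * A j i s s' * D i s'))
      = (∑ s : S j, ∑ s' : S i, D j s * A j i s s' * m i s')
        + ∑ s : S j, ∑ s' : S i, m j s * A j i s s' * D i s' from by
        simp [Finset.sum_add_distrib]]
    congr 1
    rw [Finset.sum_comm]
    refine Finset.sum_congr rfl fun s' _ => Finset.sum_congr rfl fun s _ => ?_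
    rw [hcoord j i hij s s']
    ring
  calc (∑ j, if j ∈ R then
        ((∑ i, if E j i then ∑ s : S j, ∑ s' : S i,
            (D j s * A j i s s' * m i s' + m j s * A j i s s' * D i s') else 0)
          + (-(1/β) * ∑ s, (D j s * Real.log (m j s) + m j s * (D j s / m j s)))
          + ∑ i, if E j i then
              (-(1/β) * ∑ s, (D i s * Real.log (m i s) + m i s * (D i s / m i s)))
            else 0)
      else 0)
      = ∑ j, ((if j ∈ R then ∑ i, (if E j i then F j i + F i j else 0) else 0)
          + (if j ∈ R then (e j + ∑ i, if E j i then e i else 0) else 0)) := by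
        refine Finset.sum_congr rfl fun j _ => ?_
        by_cases hj : j ∈ R
        · simp only [if_pos hj]
          have h1 : (∑ i, if E j i then ∑ s : S j, ∑ s' : S i,
              (D j s * A j i s s' * m i s' + m j s * A j i s s' * D i s') else 0)
              = ∑ i, (if E j i then F j i + F i j else 0) :=
            Finset.sum_congr rfl fun i _ => by
              by_cases hij : E j i
              · simp only [if_pos hij]; exact hX j i hij
              · simp [hij]
          have h2 : (-(1/β) * ∑ s, (D j s * Real.log (m j s) + m j s * (D j s / m j s))) = e j := by
            rw [he]; congr 1
            exact Finset.sum_congr rfl fun s _ => by rw [hcancel j s]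
          have h3 : (∑ i, if E j i then
              (-(1/β) * ∑ s, (D i s * Real.log (m i s) + m i s * (D i s / m i s))) else 0)
              = ∑ i, if E j i then e i else 0 :=
            Finset.sum_congr rfl fun i _ => by
              by_cases hij : E j i
              · simp only [if_pos hij, he]
                congr 1
                exact Finset.sum_congr rfl fun s _ => by rw [hcancel i s]
              · simp [hij]
          rw [h1, h2, h3]; ring
        · simp [hj]
    _ = (∑ j, if j ∈ R then ∑ i, (if E j i then F j i + F i j else 0) else 0)
        + ∑ j, if j ∈ R then (e j + ∑ i, if E j i then e i else 0) else 0 :=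
        Finset.sum_add_distrib
    _ = (∑ k, ∑ l, if E k l then F k l else 0) + ∑ k, e k := by
        rw [star_pair_sum E hE_symm R (fun i hi => (hleaf i hi).2) hroot F,
          star_node_sum E hE_symm R hleaf hroot e]
    _ = ∑ k, ((∑ s, D k s * payoffTo E A m k s)
        + (-(1/β) * ∑ s, (D k s * Real.log (m k s) + D k s))) := by
        rw [← Finset.sum_add_distrib]
        refine Finset.sum_congr rfl fun k _ => ?_
        congr 1
        have : ∀ s : S k, D k s * payoffTo E A m k s
            = ∑ l, if E k l then ∑ s' : S l, D k s * (A k l s s' * m l s') else 0 := by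
          intro s
          rw [payoffTo, Finset.mul_sum]
          refine Finset.sum_congr rfl fun l _ => ?_
          by_cases hkl : E k l
          · simp only [if_pos hkl, Finset.mul_sum]
          · simp [hkl]
        rw [Finset.sum_congr rfl fun s (_ : s ∈ Finset.univ) => this s, Finset.sum_comm]
        refine Finset.sum_congr rfl fun l _ => ?_
        by_cases hkl : E k l
        · simp only [if_pos hkl, Finset.sum_ite_irrel, Finset.sum_const_zero, hF]
          refine Finset.sum_congr rfl fun s _ => Finset.sum_congr rfl fun s' _ => by ring
        · simp [hkl]
end Aux


/-- in a coordination network game with star structure and root set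
`R`, the potential `L(μ) = Σ_(j∈R) (μ_jᵀ (Σ_i A_(ji) μ_i) + v_β(μ_j) + Σ_i v_β(μ_i))`
is nondecreasing along interior solutions of the homogeneous belief dynamics, with
stationary derivative exactly at QRE points. -/
theorem coordination_star_potential_nondecreasing
    {V : Type*} [Fintype V] [Nonempty V] [DecidableEq V]
    {S : V → Type*} [∀ i, Fintype (S i)] [∀ i, Nonempty (S i)] [∀ i, DecidableEq (S i)]
    (E : V → V → Prop) [DecidableRel E]
    (hE_symm : ∀ i j, E i j → E j i) (hE_irrefl : ∀ i, ¬ E i i)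
    (A : ∀ i j, S i → S j → ℝ)
    (hcoord : ∀ i j, E i j → ∀ (s : S i) (s' : S j), A i j s s' = A j i s' s)
    (R : Finset V)
    (hleaf : ∀ i, i ∉ R → (∃! j, E i j) ∧ ∀ j, E i j → j ∈ R)
    (hroot : ∀ j ∈ R, ∀ i, E j i → i ∉ R)
    (β : ℝ) (hβ : 0 < β)
    (μ : ℝ → ∀ i, S i → ℝ)
    (hμΔ : ∀ τ ≥ (0 : ℝ), inProd (μ τ) ∧ ∀ i s, 0 < μ τ i s)
    (hode : ∀ τ ≥ (0 : ℝ),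
      HasDerivAt μ (fun i s => BR E A β (μ τ) i s - μ τ i s) τ) :
    MonotoneOn
      (fun t => ∑ j, if j ∈ R then
          ((∑ i, if E j i then bilin A (μ t) (μ t) j i else 0)
            + vEnt β (μ t j) + ∑ i, if E j i then vEnt β (μ t i) else 0)
        else 0)
      (Set.Ici (0 : ℝ)) ∧
    ∀ τ ≥ (0 : ℝ),
      (deriv
        (fun t => ∑ j, if j ∈ R then
            ((∑ i, if E j i then bilin A (μ t) (μ t) j i else 0)
              + vEnt β (μ t j) + ∑ i, if E j i then vEnt β (μ t i) else 0)
          else 0) τ = 0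
        ↔ ∀ i, BR E A β (μ τ) i = μ τ i) := by
  have hderiv : ∀ τ ∈ Set.Ici (0:ℝ), HasDerivAt
      (fun t => ∑ j, if j ∈ R then
          ((∑ i, if E j i then bilin A (μ t) (μ t) j i else 0)
            + vEnt β (μ t j) + ∑ i, if E j i then vEnt β (μ t i) else 0)
        else 0)
      ((1/β) * ∑ k, ∑ s, (BR E A β (μ τ) k s - μ τ k s)
          * (Real.log (BR E A β (μ τ) k s) - Real.log (μ τ k s))) τ := by
    intro τ hτ
    obtain ⟨hΔ, hpos⟩ := hμΔ τ hτ
    have hraw := deriv_raw E A β R μ τ (fun i s => BR E A β (μ τ) i s - μ τ i s)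
      (fun i s => (hpos i s).ne') (hode τ hτ)
    rw [raw_eq E A β hE_symm hcoord R hleaf hroot (μ τ)
      (fun i s => BR E A β (μ τ) i s - μ τ i s) (fun i s => (hpos i s).ne')] at hraw
    have heq2 : (∑ k, ((∑ s, (BR E A β (μ τ) k s - μ τ k s) * payoffTo E A (μ τ) k s)
        + (-(1/β) * ∑ s, ((BR E A β (μ τ) k s - μ τ k s) * Real.log (μ τ k s)
            + (BR E A β (μ τ) k s - μ τ k s)))))
        = (1/β) * ∑ k, ∑ s, (BR E A β (μ τ) k s - μ τ k s)
            * (Real.log (BR E A β (μ τ) k s) - Real.log (μ τ k s)) := by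
      rw [Finset.mul_sum]
      exact Finset.sum_congr rfl fun k _ => node_identity E A β hβ (μ τ) k (hΔ k).2
    rw [heq2] at hraw
    exact hraw
  have hnn : ∀ τ ≥ (0:ℝ), 0 ≤ (1/β) * ∑ k, ∑ s, (BR E A β (μ τ) k s - μ τ k s)
      * (Real.log (BR E A β (μ τ) k s) - Real.log (μ τ k s)) := fun τ hτ =>
    mul_nonneg (by positivity) (Finset.sum_nonneg fun k _ => Finset.sum_nonneg fun s _ =>
      prod_log_nonneg (BR_pos E A β (μ τ) k s) ((hμΔ τ hτ).2 k s))
  constructor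
  · apply monotoneOn_of_deriv_nonneg (convex_Ici 0)
    · exact fun x hx => ((hderiv x hx).continuousAt.continuousWithinAt)
    · intro x hx
      rw [interior_Ici] at hx
      exact (hderiv x (Set.mem_Ici.mpr (le_of_lt hx))).differentiableAt.differentiableWithinAt
    · intro x hx
      rw [interior_Ici] at hx
      rw [(hderiv x (Set.mem_Ici.mpr (le_of_lt hx))).deriv]
      exact hnn x (le_of_lt hx)
  · intro τ hτ
    rw [(hderiv τ hτ).deriv]
    constructor
    · intro h
      have hβ' : (1/β : ℝ) ≠ 0 := by positivity
      have hsum : (∑ k, ∑ s, (BR E A β (μ τ) k s - μ τ k s)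
          * (Real.log (BR E A β (μ τ) k s) - Real.log (μ τ k s))) = 0 := by
        rcases mul_eq_zero.mp h with h' | h'
        · exact absurd h' hβ'
        · exact h'
      intro i
      funext s
      have h1 := (Finset.sum_eq_zero_iff_of_nonneg (fun k _ =>
        Finset.sum_nonneg fun s _ =>
          prod_log_nonneg (BR_pos E A β (μ τ) k s) ((hμΔ τ hτ).2 k s))).mp hsum i
        (Finset.mem_univ i)
      have h2 := (Finset.sum_eq_zero_iff_of_nonneg (fun s _ =>
        prod_log_nonneg (BR_pos E A β (μ τ) i s) ((hμΔ τ hτ).2 i s))).mp h1 s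
        (Finset.mem_univ s)
      exact (prod_log_eq_zero_iff (BR_pos E A β (μ τ) i s) ((hμΔ τ hτ).2 i s)).mp h2
    · intro h
      have hz : (∑ k, ∑ s, (BR E A β (μ τ) k s - μ τ k s)
          * (Real.log (BR E A β (μ τ) k s) - Real.log (μ τ k s))) = 0 :=
        Finset.sum_eq_zero fun k _ => Finset.sum_eq_zero fun s _ => by
          rw [congrFun (h k) s]; ring
      rw [hz, mul_zero]
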